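/- Every labeled graph containing four vertices a < b < c < d whose induced subgraph has exactly the edges ac and bd (an induced copy of J_4 in reduced form) is not 12-representable. -/
import Mathlib


/-- Some occurrence of `i` comes strictly before some occurrence of `j` in `w`. -/
def Occ {n : ℕ} (w : List (Fin n)) (i j : Fin n) : Prop :=
  ∃ p q : Fin w.length, p < q ∧ w.get p = i ∧ w.get q = j

/-- The word `w` over `[n]` 12-represents the labeled graph `G` on `Fin n`:
every letter occurs at least once, and for `i < j`, `i` and `j` are adjacent
iff no occurrence of `i` comes before any occurrence of `j`. -/
def Represents {n : ℕ} (G : SimpleGraph (Fin n)) (w : List (Fin n)) : Prop :=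
  (∀ v : Fin n, v ∈ w) ∧ ∀ i j : Fin n, i < j → (G.Adj i j ↔ ¬ Occ w i j)

/-- `b` is a bad vertex of `G`. -/
def Bad {n : ℕ} (G : SimpleGraph (Fin n)) (b : Fin n) : Prop :=
  ∃ a c : Fin n, a < b ∧ b < c ∧ ¬ G.Adj a b ∧ ¬ G.Adj b c ∧ G.Adj a c

theorem stmt10 (n : ℕ) (G : SimpleGraph (Fin n)) (a b c d : Fin n)
    (hab : a < b) (hbc : b < c) (hcd : c < d)
    (e1 : G.Adj a c) (e2 : G.Adj b d)
    (e3 : ¬ G.Adj a b) (e4 : ¬ G.Adj a d) (e5 : ¬ G.Adj b c) (e6 : ¬ G.Adj c d) :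
    ¬ ∃ w : List (Fin n), Represents G w := by
  rintro ⟨w, hmem, hchar⟩
  have hAC : ¬ Occ w a c := (hchar a c (hab.trans hbc)).mp e1
  have hBD : ¬ Occ w b d := (hchar b d (hbc.trans hcd)).mp e2
  have hAD : Occ w a d := not_not.mp (fun h => e4 ((hchar a d (hab.trans (hbc.trans hcd))).mpr h))
  have hBC : Occ w b c := not_not.mp (fun h => e5 ((hchar b c hbc).mpr h))
  obtain ⟨t, m, htm, hwt, hwm⟩ := hAD
  obtain ⟨u, v, huv, hwu, hwv⟩ := hBC
  have h1 : ¬ (u < m) := fun h => hBD ⟨u, m, h, hwu, hwm⟩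
  have h2 : ¬ (t < v) := fun h => hAC ⟨t, v, h, hwt, hwv⟩
  omega
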